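/- Let p and q be coprime positive integers with q odd, and assume p > q if p is odd. Then there exist a natural number n and a pinch sequence (p_k, q_k), k = 0, …, n, from (p,q) whose terminal pair satisfies q_0 = 1. (This expresses arithmetically that repeatedly applying pinch moves transforms any torus knot T(p,q) into an unknot T(p_0, 1).) -/

import Mathlib

/-- `t` and `u` are the pinch integers of the pair `(p, q)`:
`0 ≤ t ≤ p - 1`, `0 ≤ u ≤ q - 1`, `q·t ≡ -1 (mod p)` and `p·u ≡ 1 (mod q)`. -/
def PinchInts (p q t u : ℤ) : Prop :=
  0 ≤ t ∧ t ≤ p - 1 ∧ 0 ≤ u ∧ u ≤ q - 1 ∧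
    q * t ≡ -1 [ZMOD p] ∧ p * u ≡ 1 [ZMOD q]

/-- `(P k, Q k)`, `k = 0, …, n`, is a pinch sequence from `(p, q)`:
the pairs are nonnegative, `(P n, Q n) = (p, q)`, and each pair with
`1 ≤ k ≤ n` has `P k ≥ 2`, `Q k ≥ 3` odd, `gcd (P k) (Q k) = 1`,
`P k > Q k` if `P k` is odd, and `(P (k-1), Q (k-1))` equals
`(|P k - 2 t|, |Q k - 2 u|)` or its swap, where `t, u` are the pinch
integers of `(P k, Q k)`. -/
def IsPinchSeq (n : ℕ) (P Q : ℕ → ℤ) (p q : ℤ) : Prop :=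
  P n = p ∧ Q n = q ∧ (∀ k ≤ n, 0 ≤ P k ∧ 0 ≤ Q k) ∧
    ∀ k, 1 ≤ k → k ≤ n →
      2 ≤ P k ∧ 3 ≤ Q k ∧ Odd (Q k) ∧ Int.gcd (P k) (Q k) = 1 ∧
        (Odd (P k) → Q k < P k) ∧
        ∃ t u, PinchInts (P k) (Q k) t u ∧
          ((P (k - 1) = |P k - 2 * t| ∧ Q (k - 1) = |Q k - 2 * u|) ∨
           (P (k - 1) = |Q k - 2 * u| ∧ Q (k - 1) = |P k - 2 * t|))

lemma trivial_pinch_seq (p : ℤ) (hp : 0 ≤ p) :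
    IsPinchSeq 0 (fun _ => p) (fun _ => 1) p 1 :=
  ⟨rfl, rfl, fun _ _ => ⟨hp, by norm_num⟩, fun k hk1 hk2 => by omega⟩

lemma pinch_step (p q : ℤ) (hp : 2 ≤ p) (hq : 3 ≤ q) (hcop : Int.gcd p q = 1) :
    ∃ t u, PinchInts p q t u ∧ p * u - q * t = 1 ∧ 1 ≤ t ∧ 1 ≤ u := by
  have hb : (1 : ℤ) = p * Int.gcdA p q + q * Int.gcdB p q := by
    have h := Int.gcd_eq_gcd_ab p q
    rw [hcop] at h; exact_mod_cast h
  set A := Int.gcdA p q with hA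
  set B := Int.gcdB p q with hB
  have hp0 : (0:ℤ) < p := by omega
  have hq0 : (0:ℤ) < q := by omega
  set t := (-B) % p with ht
  set u := A % q with hu
  have ht0 : 0 ≤ t := Int.emod_nonneg _ (by omega)
  have htp : t < p := Int.emod_lt_of_pos _ hp0
  have hu0 : 0 ≤ u := Int.emod_nonneg _ (by omega)
  have huq : u < q := Int.emod_lt_of_pos _ hq0
  have htd : t = -B - p * ((-B)/p) := by rw [ht, Int.emod_def]
  have hud : u = A - q * (A/q) := by rw [hu, Int.emod_def]
  have hdt : p ∣ q * t + 1 := ⟨A - q * ((-B)/p), by linear_combination q * htd + hb⟩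
  have hdu : q ∣ p * u - 1 := ⟨-(B + p * (A/q)), by linear_combination p * hud - hb⟩
  have hX : p * u - q * t = 1 := by
    have hpX : p ∣ q * t + 1 - p * u := (dvd_sub hdt (Dvd.intro u rfl))
    have hqX : q ∣ q * t + 1 - p * u := by
      have : q * t + 1 - p * u = q * t - (p * u - 1) := by ring
      rw [this]; exact dvd_sub (Dvd.intro t rfl) hdu
    have hcop' : IsCoprime p q := Int.isCoprime_iff_gcd_eq_one.mpr hcop
    have hpq : p * q ∣ q * t + 1 - p * u := hcop'.mul_dvd hpX hqX
    have h1 : q * t ≤ q * (p - 1) := mul_le_mul_of_nonneg_left (by omega) (by omega)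
    have h2 : 0 ≤ p * u := mul_nonneg (by omega) hu0
    have h3 : p * u ≤ p * (q - 1) := mul_le_mul_of_nonneg_left (by omega) (by omega)
    have h4 : 0 ≤ q * t := mul_nonneg (by omega) ht0
    have h0 : q * t + 1 - p * u = 0 := by
      refine Int.eq_zero_of_abs_lt_dvd hpq ?_
      rw [abs_lt]; constructor <;> nlinarith
    linarith
  have ht1 : 1 ≤ t := by
    rcases eq_or_lt_of_le ht0 with h | h
    · exfalso
      have : p ∣ 1 := by rw [← h] at hdt; simpa using hdt
      have := Int.le_of_dvd one_pos this
      omega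
    · omega
  have hu1 : 1 ≤ u := by
    rcases eq_or_lt_of_le hu0 with h | h
    · exfalso
      have h1 : q ∣ (-1 : ℤ) := by rw [← h] at hdu; simpa using hdu
      have h2 : q ∣ (1 : ℤ) := dvd_neg.mp h1
      have := Int.le_of_dvd one_pos h2
      omega
    · omega
  refine ⟨t, u, ⟨ht0, by omega, hu0, by omega, ?_, ?_⟩, hX, ht1, hu1⟩
  · rw [Int.modEq_iff_dvd]
    have : -1 - q * t = -(q * t + 1) := by ring
    rw [this]; exact dvd_neg.mpr hdt
  · rw [Int.modEq_iff_dvd]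
    have : 1 - p * u = -(p * u - 1) := by ring
    rw [this]; exact dvd_neg.mpr hdu

lemma extend_pinch_seq {p q p' q' t u : ℤ} (hp : 2 ≤ p) (hq : 3 ≤ q) (hqodd : Odd q)
    (hcop : Int.gcd p q = 1) (hpodd : Odd p → q < p)
    (hpu : PinchInts p q t u)
    (hor : (p' = |p - 2*t| ∧ q' = |q - 2*u|) ∨ (p' = |q - 2*u| ∧ q' = |p - 2*t|))
    {n' : ℕ} {P' Q' : ℕ → ℤ} (hseq : IsPinchSeq n' P' Q' p' q') :
    ∃ P Q, IsPinchSeq (n'+1) P Q p q ∧ Q 0 = Q' 0 := by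
  obtain ⟨hPn, hQn, hnn, hstep⟩ := hseq
  refine ⟨fun k => if k ≤ n' then P' k else p, fun k => if k ≤ n' then Q' k else q,
    ⟨by simp, by simp, ?_, ?_⟩, by simp⟩
  · intro k hk
    by_cases h : k ≤ n'
    · simpa [h] using hnn k h
    · simp only [if_neg h]
      exact ⟨by omega, by omega⟩
  · intro k hk1 hk2
    by_cases h : k ≤ n'
    · have h' : k - 1 ≤ n' := le_trans (Nat.sub_le k 1) h
      simp only [if_pos h, if_pos h']
      exact hstep k hk1 h
    · have hk : k = n' + 1 := by omega
      subst hk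
      have h1 : ¬ (n' + 1 ≤ n') := by omega
      have h2 : n' + 1 - 1 ≤ n' := by omega
      simp only [Nat.add_sub_cancel, if_neg h1, if_pos (Nat.le_refl n')]
      refine ⟨hp, hq, hqodd, hcop, hpodd, t, u, hpu, ?_⟩
      rcases hor with ⟨h3, h4⟩ | ⟨h3, h4⟩
      · exact Or.inl ⟨hPn.trans h3, hQn.trans h4⟩
      · exact Or.inr ⟨hPn.trans h3, hQn.trans h4⟩

lemma gcd_abs_abs (a b : ℤ) : Int.gcd |a| |b| = Int.gcd a b := by
  show (|a|).natAbs.gcd (|b|).natAbs = _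
  rw [Int.natAbs_abs, Int.natAbs_abs]; rfl

/-- Repeatedly applying pinch moves transforms any torus knot `T(p,q)` into an
unknot `T(p₀, 1)`: there is a pinch sequence from `(p, q)` ending with `q₀ = 1`. -/
theorem exists_pinch_sequence_to_unknot (p q : ℤ)
    (hp : 0 < p) (hq : 0 < q) (hcop : Int.gcd p q = 1)
    (hqodd : Odd q) (hpodd : Odd p → q < p) :
    ∃ (n : ℕ) (P Q : ℕ → ℤ), IsPinchSeq n P Q p q ∧ Q 0 = 1 := by
  have H : ∀ N : ℕ, ∀ p q : ℤ, p + q ≤ N → 0 < p → 0 < q → Int.gcd p q = 1 →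
      Odd q → (Odd p → q < p) → ∃ n P Q, IsPinchSeq n P Q p q ∧ Q 0 = 1 := by
    intro N
    induction N with
    | zero => intro p q hsum hp hq _ _ _; exfalso; omega
    | succ N ih =>
      intro p q hsum hp hq hcop hqodd hpodd
      by_cases hq1 : q = 1
      · subst hq1
        exact ⟨0, _, _, trivial_pinch_seq p hp.le, rfl⟩
      · -- q ≥ 3
        obtain ⟨m, hm⟩ := hqodd
        have hq3 : 3 ≤ q := by omega
        have hp2 : 2 ≤ p := by
          by_contra h
          have hp1 : p = 1 := by omega
          have := hpodd ⟨0, by omega⟩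
          omega
        obtain ⟨t, u, hpinch, hkey, ht1, hu1⟩ := pinch_step p q hp2 hq3 hcop
        have ht0 := hpinch.1
        have htp := hpinch.2.1
        have hu0 := hpinch.2.2.1
        have huq := hpinch.2.2.2.1
        obtain ⟨a, ha⟩ : ∃ a, a = p - 2*t := ⟨_, rfl⟩
        obtain ⟨b, hbdef⟩ : ∃ b, b = q - 2*u := ⟨_, rfl⟩
        have hqa : q * a - p * b = 2 := by rw [ha, hbdef]; linear_combination 2*hkey
        have hbodd : Odd b := ⟨m - u, by omega⟩
        have habs_a : |a| ≤ p - 2 := abs_le.mpr ⟨by omega, by omega⟩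
        have habs_b : |b| ≤ q - 2 := abs_le.mpr ⟨by omega, by omega⟩
        have hb0 : b ≠ 0 := by intro h; rw [h] at hbodd; simpa using hbodd
        have habs_b1 : 1 ≤ |b| := by
          have := abs_pos.mpr hb0; omega
        -- gcd a b = 1
        have hg1 : Int.gcd a b = 1 := by
          have h1 : (Int.gcd a b : ℤ) ∣ a := Int.gcd_dvd_left a b
          have h2 : (Int.gcd a b : ℤ) ∣ b := Int.gcd_dvd_right a b
          have h3 : (Int.gcd a b : ℤ) ∣ 2 := by
            have : (Int.gcd a b : ℤ) ∣ q * a - p * b :=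
              dvd_sub (h1.mul_left q) (h2.mul_left p)
            rwa [hqa] at this
          have h4 : Int.gcd a b ∣ 2 := by exact_mod_cast h3
          have h5 : Int.gcd a b ∣ b.natAbs := Nat.gcd_dvd_right _ _
          have h6 : Odd b.natAbs := Int.natAbs_odd.mpr hbodd
          rcases (Nat.dvd_prime Nat.prime_two).mp h4 with h | h
          · exact h
          · exfalso
            have h5' : 2 ∣ b.natAbs := h ▸ h5
            have h6' := Nat.odd_iff.mp h6
            omega
        have hgabs : Int.gcd |a| |b| = 1 := by rw [gcd_abs_abs]; exact hg1
        have hbaodd : Odd |b| := odd_abs.mpr hbodd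
        by_cases hbone : |b| = 1
        · -- finish with trivial sequence
          have hseq : IsPinchSeq 0 (fun _ => |a|) (fun _ => |b|) |a| |b| := by
            rw [hbone]; exact trivial_pinch_seq _ (abs_nonneg a)
          obtain ⟨P, Q, hPQ, hQ0⟩ := extend_pinch_seq hp2 hq3 ⟨m, hm⟩ hcop hpodd
            hpinch (Or.inl ⟨ha ▸ rfl, hbdef ▸ rfl⟩) hseq
          exact ⟨1, P, Q, hPQ, by rw [hQ0]; exact hbone⟩
        · have hb3 : 3 ≤ |b| := by
            rcases hbaodd with ⟨c, hc⟩
            have h0 : 0 ≤ c := by linarith [habs_b1]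
            have hc1 : 1 ≤ c := by
              rcases eq_or_lt_of_le h0 with h | h
              · exfalso; apply hbone; rw [hc, ← h]; norm_num
              · omega
            linarith
          have ha0 : a ≠ 0 := by
            rintro h
            rw [h] at hqa
            have hpb : p * b = -2 := by linarith
            have h2 : p * |b| = 2 := by
              rw [← abs_of_pos (show (0:ℤ) < p by omega), ← abs_mul, hpb]; norm_num
            nlinarith [h2, hb3, hp2]
          have habs_a1 : 1 ≤ |a| := by
            have := abs_pos.mpr ha0; omega
          have hsum' : |a| + |b| ≤ (N : ℤ) := by
            push_cast at hsum; linarith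
          rcases Int.even_or_odd a with haev | haodd
          · -- new pair (|a|, |b|), no swap
            have haev' : ¬ Odd |a| := by
              rw [odd_abs]; exact Int.not_odd_iff_even.mpr haev
            obtain ⟨n', P', Q', hseq', hQ0'⟩ := ih |a| |b| hsum' (by omega) (by omega)
              hgabs hbaodd (fun h => absurd h haev')
            obtain ⟨P, Q, hPQ, hQ0⟩ := extend_pinch_seq hp2 hq3 ⟨m, hm⟩ hcop hpodd
              hpinch (Or.inl ⟨ha ▸ rfl, hbdef ▸ rfl⟩) hseq'
            exact ⟨n' + 1, P, Q, hPQ, by rw [hQ0]; exact hQ0'⟩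
          · -- both odd; |a| ≠ |b|
            have haabs : Odd |a| := odd_abs.mpr haodd
            have hne : |a| ≠ |b| := by
              intro h
              have hnn : a.natAbs = b.natAbs := by
                have := congrArg Int.natAbs h
                rwa [Int.natAbs_abs, Int.natAbs_abs] at this
              have hga : Int.gcd a b = a.natAbs := by
                show Nat.gcd a.natAbs b.natAbs = a.natAbs
                rw [hnn]; exact Nat.gcd_self _
              have h1 : a.natAbs = 1 := by omega
              have h2 : |a| = 1 := by rw [Int.abs_eq_natAbs, h1]; rfl
              omega
            rcases lt_or_gt_of_ne hne with hlt | hgt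
            · -- p' = |b|, q' = |a|, swap
              obtain ⟨n', P', Q', hseq', hQ0'⟩ := ih |b| |a| (by omega) (by omega)
                (by omega) (by rw [Int.gcd_comm]; exact hgabs) haabs (fun _ => hlt)
              obtain ⟨P, Q, hPQ, hQ0⟩ := extend_pinch_seq hp2 hq3 ⟨m, hm⟩ hcop hpodd
                hpinch (Or.inr ⟨hbdef ▸ rfl, ha ▸ rfl⟩) hseq'
              exact ⟨n' + 1, P, Q, hPQ, by rw [hQ0]; exact hQ0'⟩
            · -- p' = |a|, q' = |b|
              obtain ⟨n', P', Q', hseq', hQ0'⟩ := ih |a| |b| hsum' (by omega) (by omega)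
                hgabs hbaodd (fun _ => hgt)
              obtain ⟨P, Q, hPQ, hQ0⟩ := extend_pinch_seq hp2 hq3 ⟨m, hm⟩ hcop hpodd
                hpinch (Or.inl ⟨ha ▸ rfl, hbdef ▸ rfl⟩) hseq'
              exact ⟨n' + 1, P, Q, hPQ, by rw [hQ0]; exact hQ0'⟩
  exact H (p + q).toNat p q (by exact_mod_cast Int.self_le_toNat (p + q)) hp hq hcop hqodd hpodd
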